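/- Let S be the monoid whose elements are the subsets of B containing 0, with multiplication XY = {xy : x ∈ X, y ∈ Y}, identity {0,1}, and define Σ(X,Y) = π₁*X ∪ π₂*Y where π_i*X = {π_i* x : x ∈ X} ∪ {0}. Then (S, Σ, {0,π₁}, {0,π₂}) is a CQP monoid but not a CP monoid: Σ(π₁,π₂) ≠ {0,1}. -/

import Mathlib

open scoped Pointwise

/-- Generators of the branch monoid `B`: π₁, π₂, their stars, and 0. -/
inductive Bgen : Type
  | pi : Fin 2 → Bgen
  | pis : Fin 2 → Bgen
  | zero : Bgen

/-- Defining relations of the branch monoid: `0·b = b·0 = 0` and `πᵢπⱼ* = δᵢⱼ`. -/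
inductive Brel : FreeMonoid Bgen → FreeMonoid Bgen → Prop
  | zero_mul (x : FreeMonoid Bgen) :
      Brel (FreeMonoid.of Bgen.zero * x) (FreeMonoid.of Bgen.zero)
  | mul_zero (x : FreeMonoid Bgen) :
      Brel (x * FreeMonoid.of Bgen.zero) (FreeMonoid.of Bgen.zero)
  | pi_pis_same (i : Fin 2) :
      Brel (FreeMonoid.of (Bgen.pi i) * FreeMonoid.of (Bgen.pis i)) 1
  | pi_pis_ne (i j : Fin 2) : i ≠ j →
      Brel (FreeMonoid.of (Bgen.pi i) * FreeMonoid.of (Bgen.pis j))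
        (FreeMonoid.of Bgen.zero)

/-- The congruence generated by the defining relations. -/
def Bcon : Con (FreeMonoid Bgen) := conGen Brel

/-- The branch monoid `B`. -/
abbrev Bmon : Type := Bcon.Quotient

/-- The absorbing element `0` of `B`. -/
def bz : Bmon := Bcon.mk' (FreeMonoid.of Bgen.zero)

/-- The image of πᵢ in `B`. -/
def bpi (i : Fin 2) : Bmon := Bcon.mk' (FreeMonoid.of (Bgen.pi i))

/-- The image of πᵢ* in `B`. -/
def bpis (i : Fin 2) : Bmon := Bcon.mk' (FreeMonoid.of (Bgen.pis i))

/-- The inclusion of the free monoid `F` on π₁, π₂ into `B`. -/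
def ιF : FreeMonoid (Fin 2) →* Bmon :=
  Bcon.mk'.comp (FreeMonoid.map Bgen.pi)

/-- The star `w*` of a word `w ∈ F`, as an element of `B`: reverse the word and
star each letter. -/
def bstar (w : FreeMonoid (Fin 2)) : Bmon :=
  Bcon.mk' (FreeMonoid.ofList (((FreeMonoid.toList w).reverse).map Bgen.pis))

theorem bz_mul (x : Bmon) : bz * x = bz := by
  induction x using Con.induction_on with
  | H x => exact Con.eq Bcon |>.2 (ConGen.Rel.of _ _ (Brel.zero_mul x))

theorem mul_bz (x : Bmon) : x * bz = bz := by
  induction x using Con.induction_on with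
  | H x => exact Con.eq Bcon |>.2 (ConGen.Rel.of _ _ (Brel.mul_zero x))

/-- The monoid `S` of subsets of `B` containing `0`, under elementwise
multiplication; the identity is `{0, 1}`. -/
def Smon : Type := {X : Set Bmon // bz ∈ X}

noncomputable instance : Monoid Smon where
  mul X Y := ⟨X.val * Y.val, ⟨bz, X.prop, bz, Y.prop, bz_mul bz⟩⟩
  one := ⟨{bz, 1}, Or.inl rfl⟩
  mul_assoc X Y Z := Subtype.ext (mul_assoc X.val Y.val Z.val)
  one_mul X := Subtype.ext <| by
    show ({bz, 1} : Set Bmon) * X.val = X.val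
    rw [Set.insert_eq, Set.union_mul, Set.singleton_mul, Set.singleton_mul]
    ext b
    constructor
    · rintro (⟨x, hx, rfl⟩ | ⟨x, hx, rfl⟩)
      · simpa [bz_mul] using X.prop
      · simpa [one_mul] using hx
    · intro hb
      exact Or.inr ⟨b, hb, one_mul b⟩
  mul_one X := Subtype.ext <| by
    show X.val * ({bz, 1} : Set Bmon) = X.val
    rw [Set.insert_eq, Set.mul_union, Set.mul_singleton, Set.mul_singleton]
    ext b
    constructor
    · rintro (⟨x, hx, rfl⟩ | ⟨x, hx, rfl⟩)
      · simpa [mul_bz] using X.prop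
      · simpa [mul_one] using hx
    · intro hb
      exact Or.inr ⟨b, hb, mul_one b⟩

theorem Smon_mul_val (X Y : Smon) : (X * Y).val = X.val * Y.val := rfl

theorem Smon_one_val : (1 : Smon).val = {bz, 1} := rfl

/-- The element `{0, πᵢ}` of `S`. -/
def sπ (i : Fin 2) : Smon := ⟨{bz, bpi i}, Or.inl rfl⟩

/-- The element `{0, πᵢ*}` of `S`. -/
def sπs (i : Fin 2) : Smon := ⟨{bz, bpis i}, Or.inl rfl⟩

/-- The CQP operation on `S`: `Σ(X, Y) = π₁* X ∪ π₂* Y`. -/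
def SgS (X Y : Smon) : Smon :=
  ⟨({bz, bpis 0} : Set Bmon) * X.val ∪ ({bz, bpis 1} : Set Bmon) * Y.val,
    Or.inl ⟨bz, Or.inl rfl, bz, X.prop, bz_mul bz⟩⟩

/-- A categorical quasiproduct structure on a monoid. -/
def IsCQP {M : Type*} [Monoid M] (Sg : M → M → M) (π₁ π₂ : M) : Prop :=
  (∀ a b, π₁ * Sg a b = a) ∧ (∀ a b, π₂ * Sg a b = b) ∧
    (∀ a b c, Sg (a * c) (b * c) = Sg a b * c)

/-! ### Auxiliary material -/

theorem bpi_mul_bpis_same (i : Fin 2) : bpi i * bpis i = 1 := by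
  have : (Bcon.mk' (FreeMonoid.of (Bgen.pi i) * FreeMonoid.of (Bgen.pis i)) : Bmon)
      = Bcon.mk' 1 :=
    (Con.eq Bcon).2 (ConGen.Rel.of _ _ (Brel.pi_pis_same i))
  simpa [bpi, bpis, map_mul] using this

theorem bpi_mul_bpis_ne (i j : Fin 2) (h : i ≠ j) : bpi i * bpis j = bz := by
  have : (Bcon.mk' (FreeMonoid.of (Bgen.pi i) * FreeMonoid.of (Bgen.pis j)) : Bmon)
      = Bcon.mk' (FreeMonoid.of Bgen.zero) :=
    (Con.eq Bcon).2 (ConGen.Rel.of _ _ (Brel.pi_pis_ne i j h))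
  simpa [bpi, bpis, bz, map_mul] using this

/-- A concrete model: partial maps on binary words, used to separate elements of `B`. -/
def Mmod : Type := List (Fin 2) → Option (List (Fin 2))

instance : Mul Mmod := ⟨fun f g => fun w => (g w).bind f⟩
instance : One Mmod := ⟨fun w => some w⟩

theorem Mmod_mul_apply (f g : Mmod) (w : List (Fin 2)) :
    (f * g) w = (g w).bind f := rfl

theorem Mmod_one_apply (w : List (Fin 2)) : (1 : Mmod) w = some w := rfl

instance : Monoid Mmod where
  mul_assoc f g h := funext fun w => by
    rw [Mmod_mul_apply, Mmod_mul_apply, Mmod_mul_apply]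
    cases h w <;> rfl
  one_mul f := funext fun w => by
    rw [Mmod_mul_apply]
    cases f w <;> rfl
  mul_one f := rfl

/-- Interpretation of the generators in the model. -/
def gmod : Bgen → Mmod
  | Bgen.pi i => fun w => match w with
      | [] => none
      | j :: t => if j = i then some t else none
  | Bgen.pis i => fun w => some (i :: w)
  | Bgen.zero => fun _ => none

def φ₀ : FreeMonoid Bgen →* Mmod := FreeMonoid.lift gmod

theorem φ₀_respects : ∀ x y, Brel x y → φ₀ x = φ₀ y := by
  intro x y h
  cases h with
  | zero_mul x =>
      funext w
      rw [map_mul]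
      rw [Mmod_mul_apply]
      show (φ₀ x w).bind (gmod Bgen.zero) = gmod Bgen.zero w
      cases φ₀ x w <;> rfl
  | mul_zero x =>
      funext w
      rw [map_mul]
      rfl
  | pi_pis_same i =>
      funext w
      simp only [map_mul, FreeMonoid.lift_eval_of, Mmod_mul_apply, map_one]
      show ((gmod (Bgen.pis i)) w).bind (gmod (Bgen.pi i)) = (1 : Mmod) w
      simp [gmod, Mmod_one_apply]
  | pi_pis_ne i j hij =>
      funext w
      simp only [map_mul, FreeMonoid.lift_eval_of, Mmod_mul_apply]
      show ((gmod (Bgen.pis j)) w).bind (gmod (Bgen.pi i)) = gmod Bgen.zero w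
      simp [gmod, Ne.symm hij]

theorem Bcon_le_ker : Bcon ≤ Con.ker φ₀ :=
  Con.conGen_le.2 fun x y h => φ₀_respects x y h

/-- The separating homomorphism `B →* Mmod`. -/
def φ : Bmon →* Mmod := Bcon.lift φ₀ Bcon_le_ker

theorem φ_mk (w : FreeMonoid Bgen) : φ (Bcon.mk' w) = φ₀ w := rfl

theorem bpis_mul_bpi_ne_bz : bpis 0 * bpi 0 ≠ bz := by
  intro h
  have h2 := congrArg φ h
  have h3 := congrFun ((map_mul φ _ _).symm.trans h2) [0]
  simp only [bpis, bpi, bz, φ_mk, φ₀, FreeMonoid.lift_eval_of, Mmod_mul_apply] at h3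
  simp [gmod] at h3

theorem bpis_mul_bpi_ne_one : bpis 0 * bpi 0 ≠ 1 := by
  intro h
  have h2 := congrArg φ h
  have h3 := congrFun ((map_mul φ _ _).symm.trans (h2.trans (map_one φ))) []
  simp only [bpis, bpi, φ_mk, φ₀, FreeMonoid.lift_eval_of, Mmod_mul_apply,
    Mmod_one_apply] at h3
  simp [gmod] at h3

theorem sπ_mul_SgS (i : Fin 2) (X Y : Smon) :
    (sπ i * SgS X Y).val = ({bz, bpi i} : Set Bmon) *
      (({bz, bpis 0} : Set Bmon) * X.val ∪ ({bz, bpis 1} : Set Bmon) * Y.val) := rfl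

theorem proj0 (X Y : Smon) : sπ 0 * SgS X Y = X := by
  apply Subtype.ext
  rw [Smon_mul_val]
  show ({bz, bpi 0} : Set Bmon) *
      (({bz, bpis 0} : Set Bmon) * X.val ∪ ({bz, bpis 1} : Set Bmon) * Y.val) = X.val
  ext b
  constructor
  · rintro ⟨p, hp, q, hq, rfl⟩
    rcases hp with rfl | rfl
    · simpa [bz_mul] using X.prop
    · rcases hq with ⟨r, hr, x, hx, rfl⟩ | ⟨r, hr, y, hy, rfl⟩
      · rcases hr with rfl | rfl
        · simpa [← mul_assoc, mul_bz, bz_mul] using X.prop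
        · simpa [← mul_assoc, bpi_mul_bpis_same] using hx
      · rcases hr with rfl | rfl
        · simpa [← mul_assoc, mul_bz, bz_mul] using X.prop
        · simpa [← mul_assoc, bpi_mul_bpis_ne 0 1 (by decide), bz_mul] using X.prop
  · intro hb
    refine ⟨bpi 0, Or.inr rfl, bpis 0 * b, Or.inl ⟨bpis 0, Or.inr rfl, b, hb, rfl⟩, ?_⟩
    simp [← mul_assoc, bpi_mul_bpis_same]

theorem proj1 (X Y : Smon) : sπ 1 * SgS X Y = Y := by
  apply Subtype.ext
  rw [Smon_mul_val]
  show ({bz, bpi 1} : Set Bmon) *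
      (({bz, bpis 0} : Set Bmon) * X.val ∪ ({bz, bpis 1} : Set Bmon) * Y.val) = Y.val
  ext b
  constructor
  · rintro ⟨p, hp, q, hq, rfl⟩
    rcases hp with rfl | rfl
    · simpa [bz_mul] using Y.prop
    · rcases hq with ⟨r, hr, x, hx, rfl⟩ | ⟨r, hr, y, hy, rfl⟩
      · rcases hr with rfl | rfl
        · simpa [← mul_assoc, mul_bz, bz_mul] using Y.prop
        · simpa [← mul_assoc, bpi_mul_bpis_ne 1 0 (by decide), bz_mul] using Y.prop
      · rcases hr with rfl | rfl
        · simpa [← mul_assoc, mul_bz, bz_mul] using Y.prop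
        · simpa [← mul_assoc, bpi_mul_bpis_same] using hy
  · intro hb
    refine ⟨bpi 1, Or.inr rfl, bpis 1 * b, Or.inr ⟨bpis 1, Or.inr rfl, b, hb, rfl⟩, ?_⟩
    simp [← mul_assoc, bpi_mul_bpis_same]

theorem SgS_comp (X Y Z : Smon) : SgS (X * Z) (Y * Z) = SgS X Y * Z := by
  apply Subtype.ext
  rw [Smon_mul_val]
  show ({bz, bpis 0} : Set Bmon) * (X.val * Z.val) ∪ ({bz, bpis 1} : Set Bmon) * (Y.val * Z.val)
    = (({bz, bpis 0} : Set Bmon) * X.val ∪ ({bz, bpis 1} : Set Bmon) * Y.val) * Z.val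
  rw [Set.union_mul, mul_assoc, mul_assoc]

/-- `(S, Σ, {0,π₁}, {0,π₂})` is a CQP monoid but not a CP monoid:
`Σ(π₁,π₂) ≠ {0,1}`. -/
theorem smon_cqp_not_cp :
    IsCQP SgS (sπ 0) (sπ 1) ∧ SgS (sπ 0) (sπ 1) ≠ 1 := by
  refine ⟨⟨proj0, proj1, SgS_comp⟩, ?_⟩
  intro h
  have hmem : bpis 0 * bpi 0 ∈ (SgS (sπ 0) (sπ 1)).val :=
    Or.inl ⟨bpis 0, Or.inr rfl, bpi 0, Or.inr rfl, rfl⟩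
  rw [h, Smon_one_val] at hmem
  rcases hmem with h1 | h1
  · exact bpis_mul_bpi_ne_bz h1
  · exact bpis_mul_bpi_ne_one h1
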